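/- For every ε > 0 there exist δ > 0 and η > 0 such that for every n and every unit vector u ∈ R^n the following holds: if J_δ = {j : |u_j| < δ} satisfies Σ_{j ∈ J_δ} u_j² > ε², then for a random vector ξ uniformly distributed in Q_n one has P(⟨ξ,u⟩ ≥ 1) ≥ η; equivalently, vol_n({x ∈ Q_n : ⟨x,u⟩ ≥ 1}) ≥ η. -/

import Mathlib

open MeasureTheory RealInnerProductSpace

/-- The cube of unit volume (side length one) centered at the origin in `ℝ^n`. -/
def unitCube (n : ℕ) : Set (EuclideanSpace ℝ (Fin n)) :=
  {x | ∀ j, |x j| ≤ 1 / 2}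

open MeasureTheory Set ENNReal

namespace IHB

noncomputable def mu0 : Measure ℝ := volume.restrict (Set.Icc (-(1/2) : ℝ) (1/2))

instance : IsProbabilityMeasure mu0 := by
  constructor
  rw [mu0, Measure.restrict_apply MeasurableSet.univ, Set.univ_inter, Real.volume_Icc]
  norm_num

lemma mu0_neg : Measure.map (fun t : ℝ => -t) mu0 = mu0 := by
  have h1 : (fun t : ℝ => -t) ⁻¹' (Set.Icc (-(1/2) : ℝ) (1/2)) = Set.Icc (-(1/2) : ℝ) (1/2) := by
    ext t; simp [neg_le, le_neg, and_comm]
  rw [mu0, ← h1, ← Measure.restrict_map measurable_neg measurableSet_Icc,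
    (Measure.measurePreserving_neg (volume : Measure ℝ)).map_eq, h1]

lemma mu0_ae_mem : ∀ᵐ t ∂mu0, t ∈ Set.Icc (-(1/2) : ℝ) (1/2) :=
  ae_restrict_mem measurableSet_Icc

lemma mu0_moment (b : ℕ) : ∫ t, t ^ b ∂mu0 = ((1/2 : ℝ) ^ (b+1) - (-(1/2) : ℝ) ^ (b+1)) / (b+1) := by
  rw [mu0, integral_Icc_eq_integral_Ioc,
    ← intervalIntegral.integral_of_le (by norm_num : (-(1/2):ℝ) ≤ 1/2), integral_pow]
  

noncomputable def P (n : ℕ) : Measure (Fin n → ℝ) := Measure.pi fun _ => mu0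

instance (n : ℕ) : IsProbabilityMeasure (P n) := by
  rw [P]; infer_instance

variable {n : ℕ}

lemma P_ae_mem : ∀ᵐ x ∂(P n), ∀ j, x j ∈ Set.Icc (-(1/2) : ℝ) (1/2) := by
  rw [MeasureTheory.ae_all_iff]
  intro j
  exact (Measure.tendsto_eval_ae_ae (μ := fun _ : Fin n => mu0)).eventually mu0_ae_mem

lemma P_neg : MeasurePreserving (fun x : Fin n → ℝ => -x) (P n) (P n) := by
  have : (fun x : Fin n → ℝ => -x) = fun (x : Fin n → ℝ) (j : Fin n) => -(x j) := rfl
  rw [this, P]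
  exact measurePreserving_pi _ _ (fun _ => ⟨measurable_neg, mu0_neg⟩)

lemma P_map_eval (k : Fin n) : Measure.map (fun x : Fin n → ℝ => x k) (P n) = mu0 := by
  ext s hs
  rw [Measure.map_apply (measurable_pi_apply k) hs]
  have : (fun x : Fin n → ℝ => x k) ⁻¹' s = Set.pi Set.univ (fun j => if j = k then s else Set.univ) := by
    ext x
    simp only [Set.mem_preimage, Set.mem_pi, Set.mem_univ, forall_true_left]
    constructor
    · intro h j; by_cases hj : j = k <;> simp [hj, h]
    · intro h; have := h k; simpa using this
  rw [this, P, Measure.pi_pi]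
  rw [Finset.prod_eq_single k (fun j _ hj => by simp [hj]) (by simp)]
  simp

lemma P_eq_restrict :
    P n = (volume : Measure (Fin n → ℝ)).restrict (Set.pi Set.univ fun _ => Set.Icc (-(1/2) : ℝ) (1/2)) := by
  rw [P]
  refine Measure.pi_eq fun s hs => ?_
  rw [Measure.restrict_apply (MeasurableSet.univ_pi hs)]
  have : (Set.pi Set.univ s) ∩ (Set.pi Set.univ fun _ => Set.Icc (-(1/2) : ℝ) (1/2))
      = Set.pi Set.univ (fun j => s j ∩ Set.Icc (-(1/2) : ℝ) (1/2)) := by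
    rw [← Set.pi_inter_distrib]
  rw [this, volume_pi, Measure.pi_pi]
  exact Finset.prod_congr rfl fun j _ => by
    rw [mu0, Measure.restrict_apply (hs j)]


section Split

variable (u : Fin n → ℝ)

noncomputable def F (u : Fin n → ℝ) (c : Finset (Fin n)) (x : Fin n → ℝ) : ℝ := ∑ j ∈ c, u j * x j

lemma F_measurable (c : Finset (Fin n)) : Measurable (F u c) :=
  Finset.measurable_sum _ fun j _ => (measurable_pi_apply j).const_mul _

lemma integrable_of_bdd {φ : (Fin n → ℝ) → ℝ} (hm : Measurable φ) (C : ℝ)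
    (h : ∀ x : Fin n → ℝ, (∀ j, x j ∈ Set.Icc (-(1/2):ℝ) (1/2)) → |φ x| ≤ C) :
    Integrable φ (P n) :=
  Integrable.mono' (integrable_const C) hm.aestronglyMeasurable
    (P_ae_mem.mono fun x hx => by simpa using h x hx)

lemma prod_fst_integral {A B : Type*} [MeasurableSpace A] [MeasurableSpace B]
    (μ : Measure A) (ν : Measure B) [SFinite μ] [IsProbabilityMeasure ν] (f : A → ℝ) :
    ∫ z : A × B, f z.1 ∂μ.prod ν = ∫ x, f x ∂μ := by
  simpa using MeasureTheory.integral_prod_mul (μ := μ) (ν := ν) f (fun _ => (1:ℝ))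

lemma prod_snd_integral {A B : Type*} [MeasurableSpace A] [MeasurableSpace B]
    (μ : Measure A) (ν : Measure B) [IsProbabilityMeasure μ] [SFinite ν] (g : B → ℝ) :
    ∫ z : A × B, g z.2 ∂μ.prod ν = ∫ y, g y ∂ν := by
  simpa using MeasureTheory.integral_prod_mul (μ := μ) (ν := ν) (fun _ => (1:ℝ)) g

lemma split_integral (c : Finset (Fin n))
    (V : ({j : Fin n // j ∈ c} → ℝ) → ℝ) (W : ({j : Fin n // ¬ j ∈ c} → ℝ) → ℝ) :
    ∫ x, V (fun j => x j) * W (fun j => x j) ∂(P n)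
      = (∫ x, V (fun j => x j) ∂(P n)) * (∫ x, W (fun j => x j) ∂(P n)) := by
  classical
  set e := MeasurableEquiv.piEquivPiSubtypeProd (fun _ : Fin n => ℝ) (fun j => j ∈ c) with he
  have hmp := measurePreserving_piEquivPiSubtypeProd (fun _ : Fin n => mu0) (fun j => j ∈ c)
  have h1 := hmp.integral_comp e.measurableEmbedding (fun z => V z.1 * W z.2)
  have h3 := hmp.integral_comp e.measurableEmbedding (fun z => V z.1)
  have h4 := hmp.integral_comp e.measurableEmbedding (fun z => W z.2)
  simp only [he, MeasurableEquiv.piEquivPiSubtypeProd_apply] at h1 h3 h4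
  rw [P, h1, h3, h4, MeasureTheory.integral_prod_mul V W, prod_fst_integral, prod_snd_integral]

lemma split_event (c : Finset (Fin n))
    (S' : Set ({j : Fin n // j ∈ c} → ℝ)) (T' : Set ({j : Fin n // ¬ j ∈ c} → ℝ))
    (hS' : MeasurableSet S') (hT' : MeasurableSet T') :
    P n ({x | (fun j : {j : Fin n // j ∈ c} => x j) ∈ S'} ∩ {x | (fun j : {j : Fin n // ¬ j ∈ c} => x j) ∈ T'})
      = P n {x | (fun j : {j : Fin n // j ∈ c} => x j) ∈ S'}
        * P n {x | (fun j : {j : Fin n // ¬ j ∈ c} => x j) ∈ T'} := by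
  classical
  set e := MeasurableEquiv.piEquivPiSubtypeProd (fun _ : Fin n => ℝ) (fun j => j ∈ c) with he
  have hmp := measurePreserving_piEquivPiSubtypeProd (fun _ : Fin n => mu0) (fun j => j ∈ c)
  have hpre : ∀ (S : Set ({j : Fin n // j ∈ c} → ℝ)) (T : Set ({j : Fin n // ¬ j ∈ c} → ℝ)),
      {x : Fin n → ℝ | (fun j : {j : Fin n // j ∈ c} => x j) ∈ S}
        ∩ {x | (fun j : {j : Fin n // ¬ j ∈ c} => x j) ∈ T} = e ⁻¹' (S ×ˢ T) := by
    intro S T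
    ext x
    simp [he, MeasurableEquiv.piEquivPiSubtypeProd_apply, Set.mem_prod]
  have hA : {x : Fin n → ℝ | (fun j : {j : Fin n // j ∈ c} => x j) ∈ S'} = e ⁻¹' (S' ×ˢ Set.univ) := by
    rw [← hpre]; simp
  have hB : {x : Fin n → ℝ | (fun j : {j : Fin n // ¬ j ∈ c} => x j) ∈ T'} = e ⁻¹' (Set.univ ×ˢ T') := by
    rw [← hpre]; simp
  rw [hpre S' T', hA, hB, P,
    hmp.measure_preimage ((hS'.prod hT').nullMeasurableSet),
    hmp.measure_preimage ((hS'.prod MeasurableSet.univ).nullMeasurableSet),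
    hmp.measure_preimage ((MeasurableSet.univ.prod hT').nullMeasurableSet),
    Measure.prod_prod, Measure.prod_prod, Measure.prod_prod]
  simp [measure_univ]

lemma coord_moment (k : Fin n) (b : ℕ) :
    ∫ x, (x k) ^ b ∂(P n) = ∫ t, t ^ b ∂mu0 := by
  rw [← P_map_eval k]
  refine (integral_map (measurable_pi_apply k).aemeasurable ?_).symm
  exact (measurable_id.pow_const b).aestronglyMeasurable

lemma F_insert {c : Finset (Fin n)} {k : Fin n} (hk : k ∉ c) (x : Fin n → ℝ) :
    F u (insert k c) x = u k * x k + F u c x := by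
  rw [F, Finset.sum_insert hk, F]

lemma F_le (c : Finset (Fin n)) (x : Fin n → ℝ)
    (hx : ∀ j, x j ∈ Set.Icc (-(1/2):ℝ) (1/2)) : |F u c x| ≤ (∑ j ∈ c, |u j|) / 2 := by
  rw [F]
  refine (Finset.abs_sum_le_sum_abs _ _).trans ?_
  rw [Finset.sum_div]
  refine Finset.sum_le_sum fun j _ => ?_
  have hxj : |x j| ≤ 1/2 := abs_le.2 ⟨(hx j).1, (hx j).2⟩
  rw [abs_mul, div_eq_mul_inv]
  exact mul_le_mul_of_nonneg_left (hxj.trans (by norm_num)) (abs_nonneg _)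

lemma integrable_FaXb (c : Finset (Fin n)) (k : Fin n) (a b : ℕ) :
    Integrable (fun x => (F u c x) ^ a * (x k) ^ b) (P n) := by
  refine integrable_of_bdd (((F_measurable u c).pow_const a).mul
    ((measurable_pi_apply k).pow_const b)) (((∑ j ∈ c, |u j|) / 2) ^ a * (1/2) ^ b)
    fun x hx => ?_
  rw [abs_mul, abs_pow, abs_pow]
  have h2 : |x k| ≤ 1/2 := abs_le.2 ⟨(hx k).1, (hx k).2⟩
  exact mul_le_mul (pow_le_pow_left₀ (abs_nonneg _) (F_le u c x hx) a)
    (pow_le_pow_left₀ (abs_nonneg _) h2 b) (pow_nonneg (abs_nonneg _) b)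
    (pow_nonneg (by positivity) a)

lemma integrable_F_pow (c : Finset (Fin n)) (a : ℕ) :
    Integrable (fun x => (F u c x) ^ a) (P n) := by
  refine integrable_of_bdd ((F_measurable u c).pow_const a) (((∑ j ∈ c, |u j|) / 2) ^ a)
    fun x hx => ?_
  rw [abs_pow]
  exact pow_le_pow_left₀ (abs_nonneg _) (F_le u c x hx) a

lemma cross (c : Finset (Fin n)) {k : Fin n} (hk : k ∉ c) (a b : ℕ) :
    ∫ x, (F u c x) ^ a * (x k) ^ b ∂(P n)
      = (∫ x, (F u c x) ^ a ∂(P n)) * (((1/2:ℝ) ^ (b+1) - (-(1/2):ℝ) ^ (b+1)) / (b+1)) := by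
  classical
  have hsplit := split_integral (n := n) c
    (fun y => (∑ j ∈ c.attach, u j.1 * y j) ^ a) (fun z => (z ⟨k, hk⟩) ^ b)
  have hFa : ∀ x : Fin n → ℝ, (∑ j ∈ c.attach, u j.1 * x j.1) ^ a = (F u c x) ^ a := by
    intro x
    rw [Finset.sum_attach c (fun j => u j * x j), F]
  simp only [hFa] at hsplit
  rw [hsplit, coord_moment k b, mu0_moment b]

lemma m2 (c : Finset (Fin n)) :
    ∫ x, (F u c x) ^ 2 ∂(P n) = (∑ j ∈ c, (u j) ^ 2) / 12 := by
  classical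
  induction c using Finset.induction_on with
  | empty => simp [F]
  | @insert k c hk ih =>
    have hpt : ∀ x : Fin n → ℝ, F u (insert k c) x ^ 2
        = F u c x ^ 2 + ((2 * u k) * (F u c x ^ 1 * x k ^ 1)
          + (u k ^ 2) * (F u c x ^ 0 * x k ^ 2)) := fun x => by
      rw [F_insert u hk]; ring
    simp only [hpt]
    have h1 := integrable_F_pow u c 2
    have h2 := (integrable_FaXb u c k 1 1).const_mul (2 * u k)
    have h3 := (integrable_FaXb u c k 0 2).const_mul (u k ^ 2)
    have eOuter : ∫ x, (F u c x ^ 2 + (2 * u k * (F u c x ^ 1 * x k ^ 1)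
        + u k ^ 2 * (F u c x ^ 0 * x k ^ 2))) ∂(P n)
        = (∫ x, F u c x ^ 2 ∂(P n)) + (∫ x, (2 * u k * (F u c x ^ 1 * x k ^ 1)
        + u k ^ 2 * (F u c x ^ 0 * x k ^ 2)) ∂(P n)) := integral_add h1 (h2.add h3)
    have eInner : ∫ x, (2 * u k * (F u c x ^ 1 * x k ^ 1)
        + u k ^ 2 * (F u c x ^ 0 * x k ^ 2)) ∂(P n)
        = (∫ x, 2 * u k * (F u c x ^ 1 * x k ^ 1) ∂(P n))
        + (∫ x, u k ^ 2 * (F u c x ^ 0 * x k ^ 2) ∂(P n)) := integral_add h2 h3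
    rw [eOuter, eInner, integral_const_mul _ _, integral_const_mul _ _,
      cross u c hk 1 1, cross u c hk 0 2, ih, Finset.sum_insert hk]
    simp only [pow_zero, one_mul, integral_const, measure_univ, ENNReal.toReal_one, smul_eq_mul]
    norm_num
    ring

lemma m4 (c : Finset (Fin n)) :
    ∫ x, (F u c x) ^ 4 ∂(P n) ≤ (∑ j ∈ c, (u j) ^ 2) ^ 2 / 48 := by
  classical
  induction c using Finset.induction_on with
  | empty => simp [F]
  | @insert k c hk ih =>
    have hpt : ∀ x : Fin n → ℝ, F u (insert k c) x ^ 4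
        = F u c x ^ 4 + ((4 * u k) * (F u c x ^ 3 * x k ^ 1)
          + ((6 * u k ^ 2) * (F u c x ^ 2 * x k ^ 2)
          + ((4 * u k ^ 3) * (F u c x ^ 1 * x k ^ 3)
          + (u k ^ 4) * (F u c x ^ 0 * x k ^ 4)))) := fun x => by
      rw [F_insert u hk]; ring
    simp only [hpt]
    have h1 := integrable_F_pow u c 4
    have h2 := (integrable_FaXb u c k 3 1).const_mul (4 * u k)
    have h3 := (integrable_FaXb u c k 2 2).const_mul (6 * u k ^ 2)
    have h4 := (integrable_FaXb u c k 1 3).const_mul (4 * u k ^ 3)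
    have h5 := (integrable_FaXb u c k 0 4).const_mul (u k ^ 4)
    have e1 : ∫ x, (F u c x ^ 4 + (4 * u k * (F u c x ^ 3 * x k ^ 1)
          + (6 * u k ^ 2 * (F u c x ^ 2 * x k ^ 2)
          + (4 * u k ^ 3 * (F u c x ^ 1 * x k ^ 3)
          + u k ^ 4 * (F u c x ^ 0 * x k ^ 4))))) ∂(P n)
        = (∫ x, F u c x ^ 4 ∂(P n)) + (∫ x, (4 * u k * (F u c x ^ 3 * x k ^ 1)
          + (6 * u k ^ 2 * (F u c x ^ 2 * x k ^ 2)
          + (4 * u k ^ 3 * (F u c x ^ 1 * x k ^ 3)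
          + u k ^ 4 * (F u c x ^ 0 * x k ^ 4)))) ∂(P n)) :=
      integral_add h1 (h2.add (h3.add (h4.add h5)))
    have e2 : ∫ x, (4 * u k * (F u c x ^ 3 * x k ^ 1)
          + (6 * u k ^ 2 * (F u c x ^ 2 * x k ^ 2)
          + (4 * u k ^ 3 * (F u c x ^ 1 * x k ^ 3)
          + u k ^ 4 * (F u c x ^ 0 * x k ^ 4)))) ∂(P n)
        = (∫ x, 4 * u k * (F u c x ^ 3 * x k ^ 1) ∂(P n))
          + (∫ x, (6 * u k ^ 2 * (F u c x ^ 2 * x k ^ 2)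
          + (4 * u k ^ 3 * (F u c x ^ 1 * x k ^ 3)
          + u k ^ 4 * (F u c x ^ 0 * x k ^ 4))) ∂(P n)) :=
      integral_add h2 (h3.add (h4.add h5))
    have e3 : ∫ x, (6 * u k ^ 2 * (F u c x ^ 2 * x k ^ 2)
          + (4 * u k ^ 3 * (F u c x ^ 1 * x k ^ 3)
          + u k ^ 4 * (F u c x ^ 0 * x k ^ 4))) ∂(P n)
        = (∫ x, 6 * u k ^ 2 * (F u c x ^ 2 * x k ^ 2) ∂(P n))
          + (∫ x, (4 * u k ^ 3 * (F u c x ^ 1 * x k ^ 3)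
          + u k ^ 4 * (F u c x ^ 0 * x k ^ 4)) ∂(P n)) :=
      integral_add h3 (h4.add h5)
    have e4 : ∫ x, (4 * u k ^ 3 * (F u c x ^ 1 * x k ^ 3)
          + u k ^ 4 * (F u c x ^ 0 * x k ^ 4)) ∂(P n)
        = (∫ x, 4 * u k ^ 3 * (F u c x ^ 1 * x k ^ 3) ∂(P n))
          + (∫ x, u k ^ 4 * (F u c x ^ 0 * x k ^ 4) ∂(P n)) :=
      integral_add h4 h5
    rw [e1, e2, e3, e4, integral_const_mul _ _, integral_const_mul _ _, integral_const_mul _ _,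
      integral_const_mul _ _, cross u c hk 3 1, cross u c hk 2 2, cross u c hk 1 3,
      cross u c hk 0 4, m2 u c, Finset.sum_insert hk]
    simp only [pow_zero, one_mul, integral_const, measure_univ, ENNReal.toReal_one, smul_eq_mul]
    norm_num
    have hs : (0:ℝ) ≤ ∑ j ∈ c, (u j) ^ 2 := Finset.sum_nonneg fun j _ => sq_nonneg _
    nlinarith [sq_nonneg (u k), sq_nonneg (u k ^ 2), ih]

lemma F_neg (c : Finset (Fin n)) (x : Fin n → ℝ) : F u c (-x) = - F u c x := by
  simp [F, mul_neg, Finset.sum_neg_distrib]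

lemma sym_event (c : Finset (Fin n)) (t : ℝ) :
    P n {x | F u c x ≤ -t} = P n {x | t ≤ F u c x} := by
  have hs : MeasurableSet {x : Fin n → ℝ | t ≤ F u c x} :=
    measurableSet_le measurable_const (F_measurable u c)
  have hpre : {x : Fin n → ℝ | F u c x ≤ -t}
      = (fun x : Fin n → ℝ => -x) ⁻¹' {x | t ≤ F u c x} := by
    ext x
    simp only [Set.mem_preimage, Set.mem_setOf_eq, F_neg, le_neg]
  rw [hpre, P_neg.measure_preimage hs.nullMeasurableSet]

lemma half_event (c : Finset (Fin n)) :
    ENNReal.ofReal (1/2) ≤ P n {x | 0 ≤ F u c x} := by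
  have hcov : (Set.univ : Set (Fin n → ℝ))
      ⊆ {x | 0 ≤ F u c x} ∪ {x | F u c x ≤ -0} := by
    intro x _
    rcases le_total 0 (F u c x) with h | h
    · exact Or.inl h
    · exact Or.inr (by simpa using h)
  have h1 : (1 : ℝ≥0∞) ≤ P n {x | 0 ≤ F u c x} + P n {x | F u c x ≤ -0} := by
    calc (1 : ℝ≥0∞) = P n Set.univ := (measure_univ).symm
    _ ≤ P n ({x | 0 ≤ F u c x} ∪ {x | F u c x ≤ -0}) := measure_mono hcov
    _ ≤ _ := measure_union_le _ _
  rw [sym_event u c 0] at h1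
  rw [← two_mul] at h1
  have h2 : ENNReal.ofReal (1/2) * 2 ≤ P n {x | 0 ≤ F u c x} * 2 := by
    calc ENNReal.ofReal (1/2) * 2 = 1 := by
          rw [show (2:ℝ≥0∞) = ENNReal.ofReal 2 by simp, ← ENNReal.ofReal_mul (by norm_num)]
          norm_num
    _ ≤ P n {x | 0 ≤ F u c x} * 2 := by rwa [mul_comm] at h1
  exact (ENNReal.mul_le_mul_iff_left (by norm_num) (by norm_num)).1 h2

lemma PZ (c : Finset (Fin n)) (hv : 0 < ∑ j ∈ c, (u j) ^ 2) :
    ENNReal.ofReal (1/24) ≤ P n {x | Real.sqrt ((∑ j ∈ c, (u j) ^ 2)/24) ≤ F u c x} := by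
  set v := ∑ j ∈ c, (u j) ^ 2 with hvdef
  set E := {x : Fin n → ℝ | v/24 ≤ (F u c x) ^ 2} with hEdef
  have hEm : MeasurableSet E :=
    measurableSet_le measurable_const ((F_measurable u c).pow_const 2)
  have hpt : ∀ x : Fin n → ℝ, (F u c x) ^ 2
      ≤ v/24 + ((F u c x) ^ 4 / v + Set.indicator E (fun _ => v/4) x) := by
    intro x
    by_cases hx : x ∈ E
    · rw [Set.indicator_of_mem hx]
      have key : (F u c x) ^ 4 / v + v/4 - (F u c x) ^ 2
          = ((F u c x) ^ 2 - v/2) ^ 2 / v := by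
        field_simp
        ring
      have h0 : 0 ≤ ((F u c x) ^ 2 - v/2) ^ 2 / v := by positivity
      have h1 : 0 ≤ v/24 := by positivity
      linarith [key ▸ h0]
    · rw [Set.indicator_of_notMem hx]
      have h2 : (F u c x) ^ 2 < v/24 := not_le.1 hx
      have h3 : 0 ≤ (F u c x) ^ 4 / v := by positivity
      linarith
  have hi1 : Integrable (fun x => (F u c x) ^ 2) (P n) := integrable_F_pow u c 2
  have hi2 : Integrable (fun x => v/24 + ((F u c x) ^ 4 / v
      + Set.indicator E (fun _ => v/4) x)) (P n) :=
    (integrable_const _).add (((integrable_F_pow u c 4).div_const v).add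
      ((integrable_const _).indicator hEm))
  have hmono := integral_mono hi1 hi2 hpt
  rw [m2 u c] at hmono
  have hsplit : ∫ x, (v/24 + ((F u c x) ^ 4 / v + Set.indicator E (fun _ => v/4) x)) ∂(P n)
      = v/24 + ((∫ x, (F u c x) ^ 4 ∂(P n)) / v
        + (P n E).toReal * (v/4)) := by
    have ha : ∫ x, (v/24 + ((F u c x) ^ 4 / v + Set.indicator E (fun _ => v/4) x)) ∂(P n)
        = (∫ _x, (v/24 : ℝ) ∂(P n))
          + (∫ x, ((F u c x) ^ 4 / v + Set.indicator E (fun _ => v/4) x) ∂(P n)) :=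
      integral_add (integrable_const _) (((integrable_F_pow u c 4).div_const v).add
        ((integrable_const _).indicator hEm))
    have hb : ∫ x, ((F u c x) ^ 4 / v + Set.indicator E (fun _ => v/4) x) ∂(P n)
        = (∫ x, (F u c x) ^ 4 / v ∂(P n)) + (∫ x, Set.indicator E (fun _ => v/4) x ∂(P n)) :=
      integral_add ((integrable_F_pow u c 4).div_const v) ((integrable_const _).indicator hEm)
    rw [ha, hb, integral_indicator_const _ hEm, integral_const]
    simp [smul_eq_mul, integral_div, measureReal_def]
  rw [hsplit] at hmono
  have hm4 : (∫ x, (F u c x) ^ 4 ∂(P n)) / v ≤ v/48 := by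
    rw [div_le_iff₀ hv]
    calc (∫ x, (F u c x) ^ 4 ∂(P n)) ≤ v ^ 2 / 48 := m4 u c
    _ = v/48 * v := by ring
  have hq : (1:ℝ)/12 ≤ (P n E).toReal := by
    have h4 : 0 < v/4 := by positivity
    nlinarith [hmono, hm4]
  have hPE : ENNReal.ofReal (1/12) ≤ P n E :=
    ENNReal.ofReal_le_of_le_toReal hq
  set s := Real.sqrt (v/24) with hsdef
  have hsub : E ⊆ {x | s ≤ F u c x} ∪ {x | F u c x ≤ -s} := by
    intro x hx
    have h1 : s ≤ |F u c x| := by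
      rw [hsdef, ← Real.sqrt_sq_eq_abs]
      exact Real.sqrt_le_sqrt hx
    rcases le_abs.1 h1 with h | h
    · exact Or.inl h
    · exact Or.inr (by simpa [le_neg] using h)
  have hchain : ENNReal.ofReal (1/12) ≤ 2 * P n {x | s ≤ F u c x} := by
    calc ENNReal.ofReal (1/12) ≤ P n E := hPE
    _ ≤ P n ({x | s ≤ F u c x} ∪ {x | F u c x ≤ -s}) := measure_mono hsub
    _ ≤ P n {x | s ≤ F u c x} + P n {x | F u c x ≤ -s} := measure_union_le _ _
    _ = 2 * P n {x | s ≤ F u c x} := by rw [sym_event u c s, two_mul]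
  have h112 : ENNReal.ofReal (1/12) = 2 * ENNReal.ofReal (1/24) := by
    rw [show (2:ℝ≥0∞) = ENNReal.ofReal 2 by simp, ← ENNReal.ofReal_mul (by norm_num)]
    norm_num
  rw [h112] at hchain
  exact (ENNReal.mul_le_mul_iff_right (by norm_num) (by norm_num)).1 hchain

lemma indep_blocks {N : ℕ} (C : Fin N → Finset (Fin n))
    (hd : ∀ a b : Fin N, a ≠ b → Disjoint (C a) (C b)) (T : Fin N → ℝ) (s : Finset (Fin N)) :
    P n (⋂ b ∈ s, {x | T b ≤ F u (C b) x}) = ∏ b ∈ s, P n {x | T b ≤ F u (C b) x} := by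
  classical
  induction s using Finset.induction_on with
  | empty => simp
  | @insert a s ha ih =>
    rw [Finset.set_biInter_insert, Finset.prod_insert ha, ← ih]
    set c := C a with hc
    set S' : Set ({j : Fin n // j ∈ c} → ℝ)
      := {y | T a ≤ ∑ j ∈ c.attach, u j.1 * y j} with hS'
    set T' : Fin N → Set ({j : Fin n // ¬ j ∈ c} → ℝ) := fun b =>
      {z | T b ≤ ∑ j ∈ ((C b) \ c).attach,
        u j.1 * z ⟨j.1, fun hj => (Finset.mem_sdiff.1 j.2).2 hj⟩} with hT'
    have hSm : MeasurableSet S' :=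
      measurableSet_le measurable_const
        (Finset.measurable_sum _ fun j _ => (measurable_pi_apply j).const_mul _)
    have hTm : ∀ b, MeasurableSet (T' b) := fun b =>
      measurableSet_le measurable_const
        (Finset.measurable_sum _ fun j _ => by fun_prop)
    have hEa : {x : Fin n → ℝ | T a ≤ F u c x}
        = {x : Fin n → ℝ | (fun j : {j : Fin n // j ∈ c} => x j) ∈ S'} := by
      ext x
      simp only [hS', Set.mem_setOf_eq, F]
      rw [Finset.sum_attach c (fun j => u j * x j)]
    have hEb : ∀ b ∈ s, {x : Fin n → ℝ | T b ≤ F u (C b) x}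
        = {x : Fin n → ℝ | (fun j : {j : Fin n // ¬ j ∈ c} => x j) ∈ T' b} := by
      intro b hb
      have hba : b ≠ a := by rintro rfl; exact ha hb
      have hbc : C b \ c = C b := Finset.sdiff_eq_self_iff_disjoint.2 (hd b a hba)
      ext x
      simp only [hT', Set.mem_setOf_eq, F]
      rw [Finset.sum_attach (C b \ c) (fun j => u j * x j), hbc]
    have hbig : (⋂ b ∈ s, {x : Fin n → ℝ | T b ≤ F u (C b) x})
        = {x : Fin n → ℝ | (fun j : {j : Fin n // ¬ j ∈ c} => x j) ∈ ⋂ b ∈ s, T' b} := by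
      ext x
      simp only [Set.mem_iInter, Set.mem_setOf_eq]
      refine forall_congr' fun b => forall_congr' fun hb => ?_
      exact Iff.of_eq (congrArg (x ∈ ·) (hEb b hb)) |>.trans (by simp [hT'])
    rw [hEa, hbig,
      split_event c S' (⋂ b ∈ s, T' b) hSm
        (Set.Finite.measurableSet_biInter (Finset.finite_toSet s) fun b _ => hTm b)]

end Split

section Blocks

variable {n : ℕ} (u : Fin n → ℝ) (δ : ℝ)

noncomputable def sml : Finset (Fin n) := Finset.univ.filter fun j => |u j| < δ

noncomputable def Spre (j : Fin n) : ℝ := ∑ k ∈ (sml u δ).filter (fun k => k < j), (u k) ^ 2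

noncomputable def D (c : ℝ) : Finset (Fin n) := (sml u δ).filter fun j => Spre u δ j < c

lemma D_mono {c c' : ℝ} (h : c ≤ c') : D u δ c ⊆ D u δ c' := by
  intro j hj
  simp only [D, Finset.mem_filter] at hj ⊢
  exact ⟨hj.1, lt_of_lt_of_le hj.2 h⟩

lemma D_lower {c : ℝ} (hc : c < ∑ j ∈ sml u δ, (u j) ^ 2) :
    c ≤ ∑ j ∈ D u δ c, (u j) ^ 2 := by
  classical
  by_contra hcon
  push_neg at hcon
  rcases Finset.eq_empty_or_nonempty ((sml u δ) \ (D u δ c)) with he | hne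
  · have hsub : sml u δ ⊆ D u δ c := by
      intro j hj
      by_contra hj2
      exact Finset.notMem_empty j (he ▸ Finset.mem_sdiff.2 ⟨hj, hj2⟩)
    have := Finset.sum_le_sum_of_subset_of_nonneg hsub (fun j _ _ => sq_nonneg (u j))
    linarith
  · set jm := ((sml u δ) \ (D u δ c)).min' hne with hjm
    have hjmem := ((sml u δ) \ (D u δ c)).min'_mem hne
    rw [Finset.mem_sdiff] at hjmem
    have h1 : c ≤ Spre u δ jm := by
      by_contra h2
      exact hjmem.2 (by simp only [D, Finset.mem_filter]; exact ⟨hjmem.1, not_le.1 h2⟩)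
    have hsub : (sml u δ).filter (fun k => k < jm) ⊆ D u δ c := by
      intro k hk
      rw [Finset.mem_filter] at hk
      by_contra hk2
      have : jm ≤ k := Finset.min'_le _ _ (Finset.mem_sdiff.2 ⟨hk.1, hk2⟩)
      exact absurd hk.2 (not_lt.2 this)
    have h3 : Spre u δ jm ≤ ∑ j ∈ D u δ c, (u j) ^ 2 :=
      Finset.sum_le_sum_of_subset_of_nonneg hsub (fun j _ _ => sq_nonneg (u j))
    linarith

lemma D_upper {c : ℝ} (hc : 0 ≤ c) : ∑ j ∈ D u δ c, (u j) ^ 2 ≤ c + δ ^ 2 := by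
  classical
  rcases Finset.eq_empty_or_nonempty (D u δ c) with he | hne
  · rw [he, Finset.sum_empty]
    positivity
  · set jM := (D u δ c).max' hne with hjM
    have hjmem := (D u δ c).max'_mem hne
    simp only [D, Finset.mem_filter] at hjmem
    have hsub : D u δ c ⊆ insert jM ((sml u δ).filter (fun k => k < jM)) := by
      intro k hk
      rcases eq_or_lt_of_le ((D u δ c).le_max' k hk) with h | h
      · exact Finset.mem_insert.2 (Or.inl h)
      · simp only [D, Finset.mem_filter] at hk
        exact Finset.mem_insert.2 (Or.inr (Finset.mem_filter.2 ⟨hk.1, h⟩))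
    have h1 : ∑ j ∈ D u δ c, (u j) ^ 2
        ≤ ∑ j ∈ insert jM ((sml u δ).filter (fun k => k < jM)), (u j) ^ 2 :=
      Finset.sum_le_sum_of_subset_of_nonneg hsub (fun j _ _ => sq_nonneg (u j))
    rw [Finset.sum_insert (by simp)] at h1
    have h2 : (u jM) ^ 2 < δ ^ 2 := by
      have := (Finset.mem_filter.1 hjmem.1).2
      have h0 : |u jM| ^ 2 < δ ^ 2 := by
        apply pow_lt_pow_left₀ this (abs_nonneg _)
        norm_num
      rwa [sq_abs] at h0
    have h3 : Spre u δ jM < c := hjmem.2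
    simp only [Spre] at h3
    linarith

end Blocks

end IHB

open IHB in
theorem incompressible_halfspace_bound (ε : ℝ) (hε : 0 < ε) :
    ∃ δ η : ℝ, 0 < δ ∧ 0 < η ∧ ∀ n : ℕ, ∀ u : EuclideanSpace ℝ (Fin n), ‖u‖ = 1 →
      ε ^ 2 < ∑ j ∈ Finset.univ.filter fun j => |u j| < δ, u j ^ 2 →
      ENNReal.ofReal η ≤ volume {x ∈ unitCube n | 1 ≤ ⟪x, u⟫} := by
  classical
  set m : ℕ := ⌈(48:ℝ) / ε ^ 2⌉₊ with hm
  have hm0 : 0 < m := Nat.ceil_pos.2 (by positivity)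
  have hmR : (48:ℝ) / ε ^ 2 ≤ m := Nat.le_ceil _
  have hmR0 : (0:ℝ) < m := by exact_mod_cast hm0
  set L : ℝ := ε ^ 2 / m with hL
  have hL0 : 0 < L := by positivity
  set τ : ℝ := L / 2 with hτ
  have hτ0 : 0 < τ := by positivity
  set δ : ℝ := Real.sqrt τ with hδ
  have hδ0 : 0 < δ := Real.sqrt_pos.2 hτ0
  have hδ2 : δ ^ 2 = τ := Real.sq_sqrt hτ0.le
  set t : ℝ := Real.sqrt (τ / 24) with htdef
  have hmt : 1 ≤ (m:ℝ) * t := by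
    have h1 : (m:ℝ) * t = Real.sqrt ((m:ℝ) ^ 2 * (τ/24)) := by
      rw [Real.sqrt_mul (sq_nonneg ((m:ℝ))) _, Real.sqrt_sq hmR0.le]
    have h2 : (m:ℝ) ^ 2 * (τ/24) = (m:ℝ) * ε ^ 2 / 48 := by
      rw [hτ, hL]; field_simp; ring
    have h3 : (1:ℝ) ≤ (m:ℝ) * ε ^ 2 / 48 := by
      rw [div_le_iff₀ (by positivity : (0:ℝ) < ε ^ 2)] at hmR
      rw [le_div_iff₀ (by norm_num : (0:ℝ) < 48)]
      linarith
    rw [h1, h2]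
    exact Real.one_le_sqrt.2 h3
  refine ⟨δ, (1/24) ^ m * (1/2), hδ0, by positivity, ?_⟩
  intro n u _hnorm hsum
  have hsum' : ε ^ 2 < ∑ j ∈ sml u δ, (u j) ^ 2 := hsum
  have htotal : (m:ℝ) * L < ∑ j ∈ sml u δ, (u j) ^ 2 := by
    have : (m:ℝ) * L = ε ^ 2 := by rw [hL]; field_simp
    linarith
  set Dn : ℕ → Finset (Fin n) := fun i => if i ≤ m then IHB.D u δ (i * L) else Finset.univ
    with hDn
  have hDn_mono : ∀ {i j : ℕ}, i ≤ j → Dn i ⊆ Dn j := by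
    intro i j hij
    simp only [hDn]
    by_cases hi : i ≤ m
    · by_cases hj : j ≤ m
      · rw [if_pos hi, if_pos hj]
        exact D_mono u δ (by
          apply mul_le_mul_of_nonneg_right _ hL0.le
          exact_mod_cast hij)
      · rw [if_pos hi, if_neg hj]
        exact Finset.subset_univ _
    · rw [if_neg hi, if_neg (fun hj => hi (hij.trans hj))]
  set C : Fin (m+1) → Finset (Fin n) := fun b => Dn (b.1+1) \ Dn b.1 with hC
  set T : Fin (m+1) → ℝ := fun b => if b.1 < m then t else 0 with hT
  have hdisj : ∀ a b : Fin (m+1), a ≠ b → Disjoint (C a) (C b) := by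
    have key : ∀ a b : Fin (m+1), a.1 < b.1 → Disjoint (C a) (C b) := by
      intro a b hab
      refine Finset.disjoint_left.2 fun x hxa hxb => ?_
      simp only [hC, Finset.mem_sdiff] at hxa hxb
      exact hxb.2 (hDn_mono (show a.1+1 ≤ b.1 from hab) hxa.1)
    intro a b hab
    rcases lt_or_gt_of_ne (fun h => hab (Fin.val_injective h)) with h | h
    · exact key a b h
    · exact (key b a h).symm
  have hsplit_sum : ∀ x : Fin n → ℝ,
      IHB.F u Finset.univ x = ∑ b : Fin (m+1), IHB.F u (C b) x := by
    intro x
    have hterm : ∀ b : Fin (m+1),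
        IHB.F u (C b) x = IHB.F u (Dn (b.1+1)) x - IHB.F u (Dn b.1) x := by
      intro b
      simp only [hC, IHB.F]
      exact Finset.sum_sdiff_eq_sub (hDn_mono (Nat.le_succ _))
    rw [Finset.sum_congr rfl fun b _ => hterm b,
      Fin.sum_univ_eq_sum_range (fun i => IHB.F u (Dn (i+1)) x - IHB.F u (Dn i) x),
      Finset.sum_range_sub (fun i => IHB.F u (Dn i) x)]
    have hlast : Dn (m+1) = Finset.univ := by simp [hDn]
    have hzero : Dn 0 = ∅ := by
      simp only [hDn, if_pos (Nat.zero_le m)]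
      rw [Finset.eq_empty_iff_forall_notMem]
      intro j hj
      simp only [IHB.D, Finset.mem_filter] at hj
      have h1 : 0 ≤ Spre u δ j := Finset.sum_nonneg fun k _ => sq_nonneg _
      have h2 := hj.2
      push_cast at h2
      linarith
    rw [hlast, hzero]
    simp [IHB.F]
  have hvar : ∀ b : Fin (m+1), b.1 < m → τ ≤ ∑ j ∈ C b, (u j) ^ 2 := by
    intro b hb
    have h1 : Dn b.1 = IHB.D u δ (b.1 * L) := if_pos hb.le
    have h2 : Dn (b.1+1) = IHB.D u δ ((((b.1 : ℕ) + 1 : ℕ) : ℝ) * L) := if_pos hb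
    rw [show ((((b.1 : ℕ) + 1 : ℕ)) : ℝ) = ((b.1 : ℝ) + 1) by push_cast; ring] at h2
    have hdiff : ∑ j ∈ C b, (u j) ^ 2
        = ∑ j ∈ Dn (b.1+1), (u j) ^ 2 - ∑ j ∈ Dn b.1, (u j) ^ 2 := by
      simp only [hC]
      exact Finset.sum_sdiff_eq_sub (hDn_mono (Nat.le_succ _))
    have hlow : ((b.1:ℝ)+1) * L ≤ ∑ j ∈ Dn (b.1+1), (u j) ^ 2 := by
      rw [h2]
      have hlt : ((b.1:ℝ)+1) * L < ∑ j ∈ sml u δ, (u j) ^ 2 := by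
        have : ((b.1:ℝ)+1) * L ≤ (m:ℝ) * L := by
          apply mul_le_mul_of_nonneg_right _ hL0.le
          exact_mod_cast hb
        linarith
      exact D_lower u δ hlt
    have hup : ∑ j ∈ Dn b.1, (u j) ^ 2 ≤ (b.1:ℝ) * L + τ := by
      rw [h1, ← hδ2]
      exact D_upper u δ (by positivity)
    rw [hdiff]
    have : ((b.1:ℝ)+1) * L - ((b.1:ℝ) * L + τ) = τ := by rw [hτ]; ring
    linarith
  have hprob : ∀ b : Fin (m+1),
      ENNReal.ofReal (if b.1 < m then (1/24 : ℝ) else 1/2)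
        ≤ IHB.P n {x | T b ≤ IHB.F u (C b) x} := by
    intro b
    by_cases hb : b.1 < m
    · rw [if_pos hb]
      have hv := hvar b hb
      have hv0 : 0 < ∑ j ∈ C b, (u j) ^ 2 := lt_of_lt_of_le hτ0 hv
      refine le_trans (PZ u (C b) hv0) (measure_mono ?_)
      intro x hx
      simp only [Set.mem_setOf_eq] at hx ⊢
      have hTb : T b = t := if_pos hb
      rw [hTb, htdef]
      exact le_trans (Real.sqrt_le_sqrt (by linarith [hv] : τ/24 ≤ (∑ j ∈ C b, (u j) ^ 2)/24)) hx
    · rw [if_neg hb]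
      have hTb : T b = 0 := if_neg hb
      rw [hTb]
      exact half_event u (C b)
  have hfact := indep_blocks u C hdisj T Finset.univ
  have hprodval : ENNReal.ofReal ((1/24 : ℝ) ^ m * (1/2))
      = ∏ b : Fin (m+1), ENNReal.ofReal (if b.1 < m then (1/24 : ℝ) else 1/2) := by
    rw [Fin.prod_univ_castSucc]
    have h1 : ∀ i : Fin m, (if (Fin.castSucc i).1 < m then ENNReal.ofReal (1/24 : ℝ)
        else ENNReal.ofReal (1/2)) = ENNReal.ofReal (1/24 : ℝ) := fun i => if_pos i.2
    simp only [apply_ite ENNReal.ofReal]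
    rw [Finset.prod_congr rfl fun i _ => h1 i, Finset.prod_const, Finset.card_univ,
      Fintype.card_fin, if_neg (by simp : ¬ (Fin.last m).1 < m),
      ENNReal.ofReal_mul (by positivity), ENNReal.ofReal_pow (by norm_num)]
  have hprod : ENNReal.ofReal ((1/24 : ℝ) ^ m * (1/2))
      ≤ ∏ b ∈ Finset.univ, IHB.P n {x | T b ≤ IHB.F u (C b) x} := by
    rw [hprodval]
    exact Finset.prod_le_prod' fun b _ => hprob b
  have hincl : (⋂ b ∈ Finset.univ, {x : Fin n → ℝ | T b ≤ IHB.F u (C b) x})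
      ⊆ {x : Fin n → ℝ | 1 ≤ IHB.F u Finset.univ x} := by
    intro x hx
    have hx' : ∀ b : Fin (m+1), T b ≤ IHB.F u (C b) x := fun b =>
      Set.mem_iInter₂.1 hx b (Finset.mem_univ b)
    have hsumT : ∑ b : Fin (m+1), T b = (m:ℝ) * t := by
      rw [Fin.sum_univ_castSucc]
      have h1 : ∀ i : Fin m, T (Fin.castSucc i) = t := fun i => if_pos i.2
      rw [Finset.sum_congr rfl fun i _ => h1 i, Finset.sum_const, Finset.card_univ,
        Fintype.card_fin, hT]
      simp [nsmul_eq_mul]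
    simp only [Set.mem_setOf_eq]
    calc (1:ℝ) ≤ (m:ℝ) * t := hmt
    _ = ∑ b : Fin (m+1), T b := hsumT.symm
    _ ≤ ∑ b : Fin (m+1), IHB.F u (C b) x := Finset.sum_le_sum fun b _ => hx' b
    _ = IHB.F u Finset.univ x := (hsplit_sum x).symm
  -- measurability
  have hSm : MeasurableSet {y : Fin n → ℝ | 1 ≤ IHB.F u Finset.univ y} :=
    measurableSet_le measurable_const (F_measurable u Finset.univ)
  have hcube : MeasurableSet (Set.pi Set.univ fun _ : Fin n => Set.Icc (-(1/2):ℝ) (1/2)) :=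
    MeasurableSet.univ_pi fun _ => measurableSet_Icc
  -- connect to volume
  have hvol : volume {x ∈ unitCube n | 1 ≤ ⟪x, u⟫}
      = (volume : Measure (Fin n → ℝ))
        ({y : Fin n → ℝ | 1 ≤ IHB.F u Finset.univ y}
          ∩ Set.pi Set.univ fun _ : Fin n => Set.Icc (-(1/2):ℝ) (1/2)) := by
    have hvp := EuclideanSpace.volume_preserving_symm_measurableEquiv_toLp (Fin n)
    rw [← hvp.measure_preimage ((hSm.inter hcube).nullMeasurableSet)]
    congr 1
    ext x
    simp only [Set.mem_preimage, Set.mem_inter_iff, Set.mem_setOf_eq, Set.mem_pi, Set.mem_univ,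
      forall_true_left, unitCube,
      Set.mem_Icc, IHB.F, PiLp.inner_apply, RCLike.inner_apply, conj_trivial]
    constructor
    · rintro ⟨hcube2, hF⟩
      exact ⟨le_trans hF (le_of_eq (Finset.sum_congr rfl fun j _ => rfl)),
        fun j => abs_le.1 (hcube2 j)⟩
    · rintro ⟨hF, hIcc⟩
      exact ⟨fun j => abs_le.2 (hIcc j),
        le_trans hF (le_of_eq (Finset.sum_congr rfl fun j _ => rfl))⟩
  calc ENNReal.ofReal ((1/24 : ℝ) ^ m * (1/2))
      ≤ ∏ b ∈ Finset.univ, IHB.P n {x | T b ≤ IHB.F u (C b) x} := hprod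
  _ = IHB.P n (⋂ b ∈ Finset.univ, {x : Fin n → ℝ | T b ≤ IHB.F u (C b) x}) := hfact.symm
  _ ≤ IHB.P n {y : Fin n → ℝ | 1 ≤ IHB.F u Finset.univ y} := measure_mono hincl
  _ ≤ volume {x ∈ unitCube n | 1 ≤ ⟪x, u⟫} := by
      rw [hvol, P_eq_restrict, Measure.restrict_apply hSm]
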